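/- For every B ≥ 2 and n a power of 2B, in the hierarchical path-augmentation instance where class-j links (0 ≤ j ≤ log_{2B} n) have cost B^j and cover disjoint consecutive blocks of (2B)^j edges partitioning the path: if F' is a set of links satisfying the closure property that every non-leaf link of F' \ F has all 2B of its child links in F', and every leaf link of F' lies in F, then c(F' \ F) ≤ c(F). -/
import Mathlib


/-- Hierarchical lower-bound instance: for `B ≥ 2` and `n = (2B)^m`, links are pairs
`(j, i)` (a class-`j` link of cost `B^j` covering the `i`-th block of `(2B)^j` edges),
valid when `j ≤ m` and `i < (2B)^{m-j}`; a class-`j` link `(j,i)` with `j ≥ 1` has the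
`2B` child links `(j-1, 2B·i + t)`, `t < 2B`.  If `F'` satisfies the closure property
that every non-leaf link of `F' \ F` has all `2B` of its child links in `F'`, and every
leaf (class-0) link of `F'` lies in `F`, then `c(F' \ F) ≤ c(F)`. -/
theorem stmt15 (B m : ℕ) (hB : 2 ≤ B) (F F' : Finset (ℕ × ℕ))
    (hvalidF : ∀ ℓ ∈ F, ℓ.1 ≤ m ∧ ℓ.2 < (2 * B) ^ (m - ℓ.1))
    (hvalidF' : ∀ ℓ ∈ F', ℓ.1 ≤ m ∧ ℓ.2 < (2 * B) ^ (m - ℓ.1))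
    (hclosure : ∀ ℓ ∈ F', ℓ ∉ F → 1 ≤ ℓ.1 →
      ∀ t < 2 * B, (ℓ.1 - 1, 2 * B * ℓ.2 + t) ∈ F')
    (hleaf : ∀ ℓ ∈ F', ℓ.1 = 0 → ℓ ∈ F) :
    ∑ ℓ ∈ F' \ F, (B : ℝ) ^ ℓ.1 ≤ ∑ ℓ ∈ F, (B : ℝ) ^ ℓ.1 := by
  have hB0 : (0:ℝ) ≤ (B:ℝ) := by positivity
  set a : ℕ → ℝ := fun j => ∑ ℓ ∈ (F' \ F).filter (fun ℓ => ℓ.1 = j), (B:ℝ) ^ ℓ.1 with ha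
  set f : ℕ → ℝ := fun j => ∑ ℓ ∈ F.filter (fun ℓ => ℓ.1 = j), (B:ℝ) ^ ℓ.1 with hf
  have hanonneg : ∀ j, 0 ≤ a j := by
    intro j; apply Finset.sum_nonneg; intro ℓ _; positivity
  have hfnonneg : ∀ j, 0 ≤ f j := by
    intro j; apply Finset.sum_nonneg; intro ℓ _; positivity
  have ha0 : a 0 = 0 := by
    apply Finset.sum_eq_zero
    intro ℓ hℓ
    simp only [Finset.mem_filter, Finset.mem_sdiff] at hℓ
    exact absurd (hleaf ℓ hℓ.1.1 hℓ.2) hℓ.1.2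
  -- key inequality
  have hkey : ∀ j, 2 * a (j+1) ≤ a j + f j := by
    intro j
    have hcongr : a (j+1) = ∑ ℓ ∈ (F' \ F).filter (fun ℓ => ℓ.1 = j + 1), (B:ℝ) ^ (j+1) := by
      simp only [ha]
      exact Finset.sum_congr rfl (fun ℓ hℓ => by rw [(Finset.mem_filter.mp hℓ).2])
    have hchild : 2 * a (j+1)
        = ∑ p ∈ ((F' \ F).filter (fun ℓ => ℓ.1 = j + 1)) ×ˢ Finset.range (2*B), (B:ℝ) ^ j := by
      rw [hcongr, Finset.sum_product, Finset.mul_sum]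
      apply Finset.sum_congr rfl
      intro ℓ _
      simp only [Finset.sum_const, Finset.card_range, nsmul_eq_mul]
      push_cast
      ring
    rw [hchild]
    have hinj : ∀ p ∈ ((F' \ F).filter (fun ℓ => ℓ.1 = j + 1)) ×ˢ Finset.range (2*B),
        ∀ q ∈ ((F' \ F).filter (fun ℓ => ℓ.1 = j + 1)) ×ˢ Finset.range (2*B),
        (fun p : (ℕ × ℕ) × ℕ => (j, 2 * B * p.1.2 + p.2)) p
          = (fun p : (ℕ × ℕ) × ℕ => (j, 2 * B * p.1.2 + p.2)) q → p = q := by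
      intro p hp q hq hpq
      rw [Finset.mem_product, Finset.mem_filter, Finset.mem_range] at hp hq
      obtain ⟨⟨_, hp1⟩, hp2⟩ := hp
      obtain ⟨⟨_, hq1⟩, hq2⟩ := hq
      have h2 : 2 * B * p.1.2 + p.2 = 2 * B * q.1.2 + q.2 := by
        simpa using congrArg Prod.snd hpq
      have hBpos : 0 < 2 * B := by omega
      have e1 : (2 * B * p.1.2 + p.2) / (2 * B) = p.1.2 := by
        rw [Nat.mul_add_div hBpos, Nat.div_eq_of_lt hp2, add_zero]
      have e2 : (2 * B * q.1.2 + q.2) / (2 * B) = q.1.2 := by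
        rw [Nat.mul_add_div hBpos, Nat.div_eq_of_lt hq2, add_zero]
      have hfst2 : p.1.2 = q.1.2 := by rw [← e1, h2, e2]
      have hsnd : p.2 = q.2 := by
        rw [hfst2] at h2
        omega
      have hfst1 : p.1.1 = q.1.1 := by rw [hp1, hq1]
      ext
      · exact hfst1
      · exact hfst2
      · exact hsnd
    have hineq : ∑ p ∈ ((F' \ F).filter (fun ℓ => ℓ.1 = j + 1)) ×ˢ Finset.range (2*B), (B:ℝ) ^ j
        ≤ ∑ ℓ ∈ F'.filter (fun ℓ => ℓ.1 = j), (B:ℝ) ^ ℓ.1 := by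
      have himg : ∑ ℓ ∈ (((F' \ F).filter (fun ℓ => ℓ.1 = j + 1)) ×ˢ Finset.range (2*B)).image
            (fun p : (ℕ × ℕ) × ℕ => (j, 2 * B * p.1.2 + p.2)), (B:ℝ) ^ ℓ.1
          = ∑ p ∈ ((F' \ F).filter (fun ℓ => ℓ.1 = j + 1)) ×ˢ Finset.range (2*B), (B:ℝ) ^ j := by
        rw [Finset.sum_image hinj]
      rw [← himg]
      apply Finset.sum_le_sum_of_subset_of_nonneg
      · intro ℓ hℓ
        simp only [Finset.mem_image] at hℓ
        obtain ⟨p, hp, rfl⟩ := hℓ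
        rw [Finset.mem_product, Finset.mem_filter, Finset.mem_sdiff, Finset.mem_range] at hp
        obtain ⟨⟨⟨hpF', hpF⟩, hp1⟩, hp2⟩ := hp
        refine Finset.mem_filter.mpr ⟨?_, rfl⟩
        have := hclosure p.1 hpF' hpF (by omega) p.2 hp2
        rw [hp1] at this
        simpa using this
      · intro ℓ _ _; positivity
    refine hineq.trans ?_
    have hsplit : F'.filter (fun ℓ => ℓ.1 = j)
        = (F' \ F).filter (fun ℓ => ℓ.1 = j) ∪ (F' ∩ F).filter (fun ℓ => ℓ.1 = j) := by
      rw [← Finset.filter_union, Finset.sdiff_union_inter]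
    rw [hsplit, Finset.sum_union
      (Finset.disjoint_filter_filter (Finset.disjoint_sdiff_inter F' F))]
    apply add_le_add le_rfl
    apply Finset.sum_le_sum_of_subset_of_nonneg
    · exact Finset.filter_subset_filter _ (Finset.inter_subset_right)
    · intro ℓ _ _; positivity
  -- induction
  have hT : ∀ J, (∑ j ∈ Finset.range (J+1), a j) + a J ≤ ∑ j ∈ Finset.range J, f j := by
    intro J
    induction J with
    | zero => simp [ha0]
    | succ J ih =>
      simp only [Finset.sum_range_succ] at ih ⊢
      linarith [hkey J]
  -- assemble
  have hdecompA : ∑ ℓ ∈ F' \ F, (B:ℝ) ^ ℓ.1 = ∑ j ∈ Finset.range (m+1), a j := by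
    rw [ha]
    exact (Finset.sum_fiberwise_of_maps_to (fun ℓ hℓ => by
      simp only [Finset.mem_range]
      have := (hvalidF' ℓ (Finset.mem_sdiff.mp hℓ).1).1
      omega) _).symm
  have hdecompF : ∑ ℓ ∈ F, (B:ℝ) ^ ℓ.1 = ∑ j ∈ Finset.range (m+1), f j := by
    rw [hf]
    exact (Finset.sum_fiberwise_of_maps_to (fun ℓ hℓ => by
      simp only [Finset.mem_range]
      have := (hvalidF ℓ hℓ).1
      omega) _).symm
  rw [hdecompA, hdecompF]
  calc ∑ j ∈ Finset.range (m+1), a j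
      ≤ (∑ j ∈ Finset.range (m+1), a j) + a m := le_add_of_nonneg_right (hanonneg m)
    _ ≤ ∑ j ∈ Finset.range m, f j := hT m
    _ ≤ ∑ j ∈ Finset.range (m+1), f j := by
        rw [Finset.sum_range_succ]
        exact le_add_of_nonneg_right (hfnonneg m)
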